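/- Let k be an algebraically closed field of characteristic zero equipped with a non-Archimedean multiplicative norm ‖·‖, and let p be a prime with ‖(p : k)‖ < 1. Then: (a) the polynomial X^p + X ∈ k[X] has p distinct roots, all of norm at most 1 (so φ(z) = z^p + z has p distinct zeros in the closed unit disk D(0,1)); and (b) every c ∈ k with (p : k)·c^(p−1) + 1 = 0 (i.e., every finite critical point of φ) satisfies ‖c‖ = ‖(p : k)‖^(−(1 : ℝ)/(p−1)). In particular, φ has no critical point in any closed disk D(0,R) with R < ‖(p : k)‖^(−1/(p−1)), so the radius r·γ_{p,d} = r·‖p‖^(−1/(p−1)) in Application 1 (and the bound 1/(p−1) in Theorem D) cannot be improved. -/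

import Mathlib

open Polynomial

/-- Sharpness example (Example 7.1): `φ(z) = z^p + z` has `p` distinct zeros in the
closed unit disk (its root multiset has `p` elements and no repetitions), while
every finite critical point `c` (root of `p·z^(p−1) + 1`) satisfies
`‖c‖ = ‖p‖^(−1/(p−1))`. -/
theorem stmt15 {k : Type*} [NormedField k] [IsAlgClosed k] [CharZero k]
    [IsUltrametricDist k]
    (p : ℕ) (hp : p.Prime) (hpk : ‖(p : k)‖ < 1) :
    (Multiset.card (X ^ p + X : Polynomial k).roots = p ∧
      (X ^ p + X : Polynomial k).roots.Nodup ∧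
      ∀ x ∈ (X ^ p + X : Polynomial k).roots, ‖x‖ ≤ 1) ∧
    ∀ c : k, (p : k) * c ^ (p - 1) + 1 = 0 →
      ‖c‖ = ‖(p : k)‖ ^ (-(1 : ℝ) / ((p : ℝ) - 1)) := by
  classical
  have hp2 : 2 ≤ p := hp.two_le
  set f : Polynomial k := X ^ p + X with hf
  have hpne : p ≠ 0 := hp.ne_zero
  have hdeg : f.natDegree = p := by
    rw [hf]
    compute_degree!
    · rw [if_neg (by omega : ¬ 1 = p)]; norm_num
    · omega
  have hf0 : f ≠ 0 := by
    intro h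
    rw [h, natDegree_zero] at hdeg
    exact hpne hdeg.symm
  have hroot : ∀ x : k, x ∈ f.roots → x ^ p + x = 0 := by
    intro x hx
    have := (mem_roots hf0).mp hx
    simpa [hf, IsRoot] using this
  refine ⟨⟨?_, ?_, ?_⟩, ?_⟩
  · -- card roots = p
    rw [← hdeg]
    exact splits_iff_card_roots.mp (IsAlgClosed.splits f)
  · -- nodup
    rw [Multiset.nodup_iff_count_le_one]
    intro x
    rw [count_roots]
    by_contra hcount
    push_neg at hcount
    have hder : (derivative^[1] f).IsRoot x :=
      isRoot_iterate_derivative_of_lt_rootMultiplicity hcount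
    have hr : f.IsRoot x := isRoot_iterate_derivative_of_lt_rootMultiplicity
      (n := 0) (lt_of_lt_of_le one_pos (le_of_lt hcount))
    have hx0 : x ^ p + x = 0 := by simpa [hf, IsRoot] using hr
    have hdx : (p : k) * x ^ (p - 1) + 1 = 0 := by
      have hdf : derivative f = C (p : k) * X ^ (p - 1) + 1 := by
        simp [hf, derivative_X_pow]
      simpa [hdf, IsRoot] using hder
    have hxfac : x * (x ^ (p - 1) + 1) = 0 := by
      have hxx : x * x ^ (p - 1) = x ^ p := by
        rw [← pow_succ']
        congr 1
        omega
      rw [mul_add, hxx, mul_one]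
      exact hx0
    rcases mul_eq_zero.mp hxfac with h1 | h2
    · rw [h1] at hdx
      have hz : (0 : k) ^ (p - 1) = 0 := zero_pow (by omega)
      rw [hz, mul_zero, zero_add] at hdx
      exact one_ne_zero hdx
    · have hxp : x ^ (p - 1) = -1 := by linear_combination h2
      rw [hxp] at hdx
      have hpk1 : (p : k) = 1 := by linear_combination -hdx
      have : (p : ℕ) = 1 := by exact_mod_cast hpk1
      omega
  · -- norm ≤ 1
    intro x hx
    have hx0 := hroot x hx
    have hnorm : ‖x‖ ^ p = ‖x‖ := by
      have hxp : x ^ p = -x := by linear_combination hx0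
      calc ‖x‖ ^ p = ‖x ^ p‖ := (norm_pow x p).symm
        _ = ‖-x‖ := by rw [hxp]
        _ = ‖x‖ := norm_neg x
    by_contra hgt
    push_neg at hgt
    have h1 : ‖x‖ < ‖x‖ ^ 2 := by nlinarith
    have h2 : ‖x‖ ^ 2 ≤ ‖x‖ ^ p := pow_le_pow_right₀ (le_of_lt hgt) hp2
    linarith [hnorm ▸ lt_of_lt_of_le h1 h2]
  · -- critical points
    intro c hc
    have hpk0 : (p : k) ≠ 0 := Nat.cast_ne_zero.mpr hpne
    have hpknorm : (0 : ℝ) < ‖(p : k)‖ := norm_pos_iff.mpr hpk0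
    have hkey : ‖(p : k)‖ * ‖c‖ ^ (p - 1) = 1 := by
      have hcp : (p : k) * c ^ (p - 1) = -1 := by linear_combination hc
      calc ‖(p : k)‖ * ‖c‖ ^ (p - 1) = ‖(p : k) * c ^ (p - 1)‖ := by
            rw [norm_mul, norm_pow]
        _ = ‖(-1 : k)‖ := by rw [hcp]
        _ = 1 := by simp
    have hcpow : ‖c‖ ^ (p - 1) = ‖(p : k)‖⁻¹ := by
      field_simp
      linear_combination hkey
    have hn0 : p - 1 ≠ 0 := by omega
    have hcnn : (0 : ℝ) ≤ ‖c‖ := norm_nonneg c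
    have hcval : ‖c‖ = (‖(p : k)‖⁻¹) ^ (((p - 1 : ℕ) : ℝ)⁻¹) := by
      rw [← hcpow, Real.pow_rpow_inv_natCast hcnn hn0]
    rw [hcval, ← Real.rpow_neg_one ‖(p : k)‖, ← Real.rpow_mul hpknorm.le]
    congr 1
    rw [Nat.cast_sub (by omega : 1 ≤ p)]
    push_cast
    ring
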